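/- Fix n ∈ ℕ and p ∈ 𝒫. If x ∈ ρ^k(n, p) and y ∈ ρ^m(n, p) are distinct punctures such that the tiles t(x) and t(y) of ω^n(p) are adjacent (the interior of t(x) ∪ t(y) is connected), then |k − m| ≤ 1. -/

import Mathlib

open Metric Set Pointwise

noncomputable section

/-- Points of `ℝ^d`. -/
abbrev Pt (d : ℕ) := EuclideanSpace ℝ (Fin d)

/-- A (possibly labelled) tile in `ℝ^d`: a subset of `ℝ^d` together with a label. -/
structure Tile (d : ℕ) where
  carrier : Set (Pt d)
  label : ℕ

instance {d : ℕ} : Inhabited (Tile d) := ⟨⟨∅, 0⟩⟩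

/-- Translate of a tile by a vector. -/
def Tile.translate {d : ℕ} (t : Tile d) (x : Pt d) : Tile d :=
  ⟨(fun y => y + x) '' t.carrier, t.label⟩

/-- A tile proper: homeomorphic to the closed unit ball. -/
def Tile.IsTile {d : ℕ} (t : Tile d) : Prop :=
  Nonempty (t.carrier ≃ₜ (Metric.closedBall (0 : Pt d) 1))

/-- Support of a partial tiling: the union of its tiles. -/
def psupp {d : ℕ} (P : Set (Tile d)) : Set (Pt d) := ⋃ t ∈ P, t.carrier

/-- `tilesAt P U` = the tiles of `P` meeting `U`, written `P(U)` in the paper. -/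
def tilesAt {d : ℕ} (P : Set (Tile d)) (U : Set (Pt d)) : Set (Tile d) :=
  {t ∈ P | (t.carrier ∩ U).Nonempty}

/-- Translate of a collection of tiles. -/
def translateSet {d : ℕ} (P : Set (Tile d)) (x : Pt d) : Set (Tile d) :=
  (fun t => t.translate x) '' P

/-- A partial tiling: tiles with pairwise disjoint interiors. -/
def IsPartialTiling {d : ℕ} (P : Set (Tile d)) : Prop :=
  (∀ t ∈ P, t.IsTile) ∧
  ∀ t ∈ P, ∀ t' ∈ P, t ≠ t' → interior t.carrier ∩ interior t'.carrier = ∅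

/-- A patch: a finite partial tiling. -/
def IsPatch {d : ℕ} (P : Set (Tile d)) : Prop := IsPartialTiling P ∧ P.Finite

/-- A tiling of all of `ℝ^d`. -/
def IsTilingOfSpace {d : ℕ} (P : Set (Tile d)) : Prop :=
  IsPartialTiling P ∧ psupp P = univ

/-- A substitution tiling system `(𝒫, ω)` with inflation constant `λ > 1`. -/
structure SubstSystem (d : ℕ) where
  proto : Set (Tile d)
  proto_finite : proto.Finite
  proto_nonempty : proto.Nonempty
  proto_isTile : ∀ p ∈ proto, p.IsTile
  proto_zero_mem : ∀ p ∈ proto, (0 : Pt d) ∈ interior p.carrier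
  proto_no_translate : ∀ p ∈ proto, ∀ q ∈ proto, ∀ x : Pt d,
    q = p.translate x → p = q ∧ x = 0
  lam : ℝ
  one_lt_lam : 1 < lam
  sub : Tile d → Set (Tile d)
  sub_patch : ∀ p ∈ proto, IsPatch (sub p)
  sub_proto : ∀ p ∈ proto, ∀ t ∈ sub p, ∃ q ∈ proto, ∃ x : Pt d, t = q.translate x
  sub_supp : ∀ p ∈ proto, psupp (sub p) = lam • p.carrier
  sub_translate : ∀ (t : Tile d) (x : Pt d),
    sub (t.translate x) = (fun s => s.translate (lam • x)) '' sub t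

namespace SubstSystem

variable {d : ℕ} (S : SubstSystem d)

/-- Tile-wise application of the substitution to a collection of tiles. -/
def subSet (P : Set (Tile d)) : Set (Tile d) := ⋃ t ∈ P, S.sub t

/-- Iterated substitution `ω^n` on collections of tiles. -/
def subIter (n : ℕ) (P : Set (Tile d)) : Set (Tile d) := (S.subSet)^[n] P

/-- `ω^n(t)` for a single tile `t`. -/
def omegan (n : ℕ) (t : Tile d) : Set (Tile d) := S.subIter n {t}

/-- The continuous hull `Ω`. -/
def Omega : Set (Set (Tile d)) :=
  {T | IsTilingOfSpace T ∧ ∀ P : Set (Tile d), P ⊆ T → IsPatch P →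
    ∃ n : ℕ, ∃ p ∈ S.proto, ∃ x : Pt d, P ⊆ translateSet (S.omegan n p) x}

/-- `x` is the puncture of the tile `t`, i.e. `t = p + x` for a prototile `p`. -/
def IsPuncture (t : Tile d) (x : Pt d) : Prop :=
  ∃ p ∈ S.proto, t = p.translate x

open Classical in
/-- The puncture `x(t)` of a tile `t` (chosen; unique for translates of prototiles). -/
def punc (t : Tile d) : Pt d :=
  if h : ∃ x : Pt d, S.IsPuncture t x then h.choose else 0

/-- The punctured hull (transversal) `Ω_punc`. -/
def OmegaPunc : Set (Set (Tile d)) :=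
  {T ∈ S.Omega | ∃ t ∈ T, S.IsPuncture t 0}

end SubstSystem

/-- The tiling metric. -/
def tilingDist {d : ℕ} (T T' : Set (Tile d)) : ℝ :=
  sInf ({1} ∪ {ε : ℝ | 0 < ε ∧ ∃ x x' : Pt d, ‖x‖ < ε ∧ ‖x'‖ < ε ∧
    tilesAt (translateSet T (-x)) (ball (0 : Pt d) (1 / ε)) =
      tilesAt (translateSet T' (-x')) (ball (0 : Pt d) (1 / ε))})

namespace SubstSystem

variable {d : ℕ} (S : SubstSystem d)

/-- Density of a family of tilings in `Ω_punc` w.r.t. the tiling metric. -/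
def DenseInPunc (E : Set (Set (Tile d))) : Prop :=
  ∀ T ∈ S.OmegaPunc, ∀ ε : ℝ, 0 < ε → ∃ T' ∈ E, tilingDist T T' < ε

/-- Openness of a subset of `Ω_punc` w.r.t. the tiling metric (subspace topology). -/
def OpenInPunc (E : Set (Set (Tile d))) : Prop :=
  E ⊆ S.OmegaPunc ∧ ∀ T ∈ E, ∃ ε : ℝ, 0 < ε ∧
    ∀ T' ∈ S.OmegaPunc, tilingDist T T' < ε → T' ∈ E

/-- The translational equivalence relation `R_punc` on `Ω_punc`. -/
def Rpunc : Set (Set (Tile d) × Set (Tile d)) :=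
  {TT | TT.1 ∈ S.OmegaPunc ∧ TT.2 ∈ S.OmegaPunc ∧ ∃ x : Pt d, TT.2 = translateSet TT.1 x}

/-- `Punc(n, p)`: the punctures of the tiles of `ω^n(p)`. -/
def Punc (n : ℕ) (p : Tile d) : Set (Pt d) :=
  {x | ∃ t ∈ S.omegan n p, S.IsPuncture t x}

/-- `E^n_p(x, y)`. -/
def Eset (n : ℕ) (p : Tile d) (x y : Pt d) : Set (Set (Tile d) × Set (Tile d)) :=
  {TT | ∃ T ∈ S.OmegaPunc, p ∈ T ∧
    TT.1 = translateSet (S.subIter n T) (-x) ∧ TT.2 = translateSet (S.subIter n T) (-y)}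

/-- `R_n`. -/
def Rn (n : ℕ) : Set (Set (Tile d) × Set (Tile d)) :=
  ⋃ p ∈ S.proto, ⋃ x ∈ S.Punc n p, ⋃ y ∈ S.Punc n p, S.Eset n p x y

/-- `R_AF = ∪ₙ R_n`. -/
def RAF : Set (Set (Tile d) × Set (Tile d)) := ⋃ n : ℕ, S.Rn n

/-- `U(P, t)`. -/
def Uset (P : Set (Tile d)) (t : Tile d) : Set (Set (Tile d)) :=
  {T ∈ S.OmegaPunc | translateSet P (-(S.punc t)) ⊆ T}

/-- `V(P, t₁, t₂)`. -/
def Vset (P : Set (Tile d)) (t₁ t₂ : Tile d) : Set (Set (Tile d) × Set (Tile d)) :=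
  {TT | TT.1 ∈ S.Uset P t₁ ∧ TT.2 = translateSet TT.1 (S.punc t₁ - S.punc t₂)}

/-- (A1) primitivity. -/
def Primitive : Prop :=
  ∃ N : ℕ, ∀ p ∈ S.proto, ∀ q ∈ S.proto, ∃ x : Pt d, Tile.translate q x ∈ S.omegan N p

/-- (A2) finite local complexity. -/
def FLC : Prop :=
  ∀ R : ℝ, 0 < R → ∃ Ps : Set (Set (Tile d)), Ps.Finite ∧
    ∀ P : Set (Tile d), IsPatch P → Metric.diam (psupp P) < R →
      (∃ T ∈ S.Omega, P ⊆ T) → ∃ P₀ ∈ Ps, ∃ x : Pt d, P = translateSet P₀ x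

/-- (A3) `ω : Ω → Ω` is bijective. -/
def SubBijective : Prop := Set.BijOn S.subSet S.Omega S.Omega

/-- (A4) `ω` forces its border. -/
def ForcesBorder : Prop :=
  ∃ n : ℕ, ∀ p ∈ S.proto, ∀ T ∈ S.Omega, ∀ T' ∈ S.Omega, ∀ x x' : Pt d,
    translateSet (S.omegan n p) x ⊆ T → translateSet (S.omegan n p) x' ⊆ T' →
    translateSet (tilesAt T ((fun y => y + x) '' psupp (S.omegan n p))) (-x) =
      translateSet (tilesAt T' ((fun y => y + x') '' psupp (S.omegan n p))) (-x')

/-- Prototile boundaries have box-counting dimension strictly less than `d`. -/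
def SmallBoundary : Prop :=
  ∃ c : ℝ, c < d ∧ ∃ K₀ : ℝ, ∀ p ∈ S.proto, ∀ ε : ℝ, 0 < ε →
    ∃ centers : Finset (Pt d), (centers.card : ℝ) ≤ K₀ * ε ^ (-c) ∧
      frontier p.carrier ⊆ ⋃ z ∈ centers, ball z ε

end SubstSystem

/-- A symmetry group action for `(𝒫, ω)`: `G ≤ O(d, ℝ)` acting on tiles, preserving
the prototile set and commuting with the substitution. -/
structure SymmAction {d : ℕ} (S : SubstSystem d) (G : Subgroup (Pt d ≃ₗᵢ[ℝ] Pt d)) where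
  act : G → Tile d → Tile d
  act_carrier : ∀ (g : G) (t : Tile d),
    (act g t).carrier = (g : Pt d ≃ₗᵢ[ℝ] Pt d) '' t.carrier
  act_one : ∀ t : Tile d, act 1 t = t
  act_mul : ∀ (g h : G) (t : Tile d), act (g * h) t = act g (act h t)
  act_proto : ∀ (g : G), ∀ p ∈ S.proto, act g p ∈ S.proto
  act_translate : ∀ (g : G) (t : Tile d) (x : Pt d),
    act g (t.translate x) = (act g t).translate ((g : Pt d ≃ₗᵢ[ℝ] Pt d) x)
  act_sub : ∀ (g : G), ∀ p ∈ S.proto, S.sub (act g p) = act g '' S.sub p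

/-- Action of a group element on a (partial) tiling: `gT = {gt : t ∈ T}`. -/
def SymmAction.actSet {d : ℕ} {S : SubstSystem d} {G : Subgroup (Pt d ≃ₗᵢ[ℝ] Pt d)}
    (σ : SymmAction S G) (g : G) (T : Set (Tile d)) : Set (Tile d) := σ.act g '' T

/-- `G` acts freely on the prototile set. -/
def SymmAction.FreeOnProto {d : ℕ} {S : SubstSystem d} {G : Subgroup (Pt d ≃ₗᵢ[ℝ] Pt d)}
    (σ : SymmAction S G) : Prop := ∀ g : G, ∀ p ∈ S.proto, σ.act g p = p → g = 1

/-- Composition of relations. -/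
def relComp {α : Type*} (R₁ R₂ : Set (α × α)) : Set (α × α) :=
  {q | ∃ z : α, (q.1, z) ∈ R₁ ∧ (z, q.2) ∈ R₂}

/-- Transpose (inverse) of a relation. -/
def relTrans {α : Type*} (R : Set (α × α)) : Set (α × α) := {q | (q.2, q.1) ∈ R}

end

open Classical in
/-- `t(x)`: the tile of `ω^n(p)` with puncture `x` (chosen). -/
noncomputable def tileOf {d : ℕ} (S : SubstSystem d) (n : ℕ) (p : Tile d) (x : Pt d) : Tile d :=
  if h : ∃ t ∈ S.omegan n p, S.IsPuncture t x then h.choose else default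

/-- `rhoCum S n p k = ρ^0(n,p) ∪ ⋯ ∪ ρ^{k−1}(n,p)`: the punctures removed after
peeling off `k` boundary layers from `ω^n(p)`. -/
noncomputable def rhoCum {d : ℕ} (S : SubstSystem d) (n : ℕ) (p : Tile d) : ℕ → Set (Pt d)
  | 0 => ∅
  | k + 1 => rhoCum S n p k ∪
      {x ∈ S.Punc n p | x ∉ rhoCum S n p k ∧
        ((tileOf S n p x).carrier ∩
          frontier (psupp {t ∈ S.omegan n p |
            ∀ x' : Pt d, S.IsPuncture t x' → x' ∉ rhoCum S n p k})).Nonempty}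

/-- The `k`-th boundary layer `ρ^k(n, p)` of punctures of `ω^n(p)`. -/
def rho {d : ℕ} (S : SubstSystem d) (n : ℕ) (p : Tile d) (k : ℕ) : Set (Pt d) :=
  rhoCum S n p (k + 1) \ rhoCum S n p k


section AuxStmt12

variable {d : ℕ}

lemma Tile.ext' {t t' : Tile d} (hc : t.carrier = t'.carrier) (hl : t.label = t'.label) :
    t = t' := by
  cases t; cases t'; cases hc; cases hl; rfl

lemma Tile.translate_translate (t : Tile d) (a b : Pt d) :
    (t.translate a).translate b = t.translate (a + b) := by
  refine Tile.ext' ?_ rfl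
  show (fun y => y + b) '' ((fun y => y + a) '' t.carrier) = _
  rw [Set.image_image]
  apply Set.image_congr'
  intro y; rw [add_assoc]

lemma Tile.translate_zero (t : Tile d) : t.translate 0 = t := by
  refine Tile.ext' ?_ rfl
  show (fun y => y + 0) '' t.carrier = t.carrier
  simp

lemma interior_translate (C : Set (Pt d)) (a : Pt d) :
    interior ((fun y => y + a) '' C) = (fun y => y + a) '' interior C := by
  have h := (Homeomorph.addRight a).image_interior C
  simpa using h.symm

lemma Tile.IsTile.translate' {t : Tile d} (h : t.IsTile) (v : Pt d) :
    (t.translate v).IsTile := by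
  obtain ⟨e⟩ := h
  have h1 : t.carrier ≃ₜ ((fun y => y + v) '' t.carrier) := by
    have := (Homeomorph.addRight v).image t.carrier
    exact this
  exact ⟨h1.symm.trans e⟩

lemma Tile.IsTile.isClosed {t : Tile d} (h : t.IsTile) : IsClosed t.carrier := by
  obtain ⟨e⟩ := h
  have hcb : CompactSpace (Metric.closedBall (0 : Pt d) 1) :=
    isCompact_iff_compactSpace.mp (isCompact_closedBall _ _)
  have : CompactSpace t.carrier := e.symm.compactSpace
  exact (isCompact_iff_compactSpace.mpr this).isClosed

lemma psupp_image_translate (P : Set (Tile d)) (v : Pt d) :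
    psupp ((fun s => s.translate v) '' P) = (fun y => y + v) '' psupp P := by
  ext z
  simp only [psupp, Tile.translate, Set.mem_iUnion, Set.mem_image, exists_prop]
  constructor
  · rintro ⟨t, ⟨t₀, ht₀, rfl⟩, hz⟩
    obtain ⟨w, hw, rfl⟩ := hz
    exact ⟨w, ⟨t₀, ht₀, hw⟩, rfl⟩
  · rintro ⟨w, ⟨t₀, ht₀, hw⟩, rfl⟩
    exact ⟨t₀.translate v, ⟨t₀, ht₀, rfl⟩, ⟨w, hw, rfl⟩⟩

namespace SubstSystem

variable (S : SubstSystem d)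

lemma lam_ne_zero : S.lam ≠ 0 := by
  have := S.one_lt_lam; positivity

lemma interior_smul' (C : Set (Pt d)) : interior (S.lam • C) = S.lam • interior C := by
  have h := (Homeomorph.smulOfNeZero S.lam S.lam_ne_zero (α := Pt d)).image_interior C
  simpa using h.symm

lemma smul_set_inter' (A B : Set (Pt d)) : S.lam • (A ∩ B) = S.lam • A ∩ S.lam • B := by
  have hinj : Function.Injective (fun y : Pt d => S.lam • y) :=
    smul_right_injective (Pt d) S.lam_ne_zero
  have : ∀ C : Set (Pt d), S.lam • C = (fun y : Pt d => S.lam • y) '' C := fun C => rfl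
  rw [this, this, this, Set.image_inter hinj]

lemma smul_set_translate (C : Set (Pt d)) (v : Pt d) :
    S.lam • ((fun y => y + v) '' C) = (fun y => y + S.lam • v) '' (S.lam • C) := by
  ext z
  simp only [Set.mem_smul_set, Set.mem_image]
  constructor
  · rintro ⟨a, ⟨b, hb, rfl⟩, rfl⟩
    exact ⟨S.lam • b, ⟨b, hb, rfl⟩, by rw [smul_add]⟩
  · rintro ⟨a, ⟨b, hb, rfl⟩, rfl⟩
    exact ⟨b + v, ⟨b, hb, rfl⟩, by rw [smul_add]⟩

lemma supp_sub {t : Tile d} (ht : ∃ q ∈ S.proto, ∃ z : Pt d, t = q.translate z) :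
    psupp (S.sub t) = S.lam • t.carrier := by
  obtain ⟨q, hq, z, rfl⟩ := ht
  rw [S.sub_translate, psupp_image_translate, S.sub_supp q hq]
  show _ = S.lam • ((fun y => y + z) '' q.carrier)
  rw [S.smul_set_translate]

lemma patch_sub {t : Tile d} (ht : ∃ q ∈ S.proto, ∃ z : Pt d, t = q.translate z) :
    IsPatch (S.sub t) ∧ ∀ s ∈ S.sub t, ∃ r ∈ S.proto, ∃ w : Pt d, s = r.translate w := by
  obtain ⟨q, hq, z, rfl⟩ := ht
  have hpq := S.sub_patch q hq
  rw [S.sub_translate]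
  refine ⟨⟨⟨?_, ?_⟩, hpq.2.image _⟩, ?_⟩
  · rintro s ⟨s₀, hs₀, rfl⟩
    exact (hpq.1.1 s₀ hs₀).translate' _
  · rintro s ⟨s₀, hs₀, rfl⟩ s' ⟨s₀', hs₀', rfl⟩ hne
    have hne₀ : s₀ ≠ s₀' := fun h => hne (by rw [h])
    have hd := hpq.1.2 s₀ hs₀ s₀' hs₀' hne₀
    show interior ((fun y => y + S.lam • z) '' s₀.carrier) ∩
        interior ((fun y => y + S.lam • z) '' s₀'.carrier) = ∅
    rw [interior_translate, interior_translate,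
      ← Set.image_inter (add_left_injective _), hd, Set.image_empty]
  · rintro s ⟨s₀, hs₀, rfl⟩
    obtain ⟨r, hr, w, rfl⟩ := S.sub_proto q hq s₀ hs₀
    exact ⟨r, hr, w + S.lam • z, (Tile.translate_translate r w (S.lam • z)).symm ▸ rfl⟩

/-- The key structural invariant: `ω^n(p)` is a patch of prototile translates. -/
lemma nice_subSet {P : Set (Tile d)} (hP : IsPatch P)
    (hPr : ∀ t ∈ P, ∃ q ∈ S.proto, ∃ z : Pt d, t = q.translate z) :
    IsPatch (S.subSet P) ∧
      ∀ s ∈ S.subSet P, ∃ q ∈ S.proto, ∃ z : Pt d, s = q.translate z := by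
  have hmem : ∀ s, s ∈ S.subSet P ↔ ∃ t ∈ P, s ∈ S.sub t := by
    intro s; simp [SubstSystem.subSet]
  refine ⟨⟨⟨?_, ?_⟩, ?_⟩, ?_⟩
  · intro s hs
    obtain ⟨t, ht, hst⟩ := (hmem s).mp hs
    exact (S.patch_sub (hPr t ht)).1.1.1 s hst
  · intro s hs s' hs' hne
    obtain ⟨t, ht, hst⟩ := (hmem s).mp hs
    obtain ⟨t', ht', hst'⟩ := (hmem s').mp hs'
    rcases eq_or_ne t t' with rfl | htt
    · exact (S.patch_sub (hPr t ht)).1.1.2 s hst s' hst' hne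
    · have h1 : interior s.carrier ⊆ S.lam • interior t.carrier := by
        have hsub : s.carrier ⊆ psupp (S.sub t) := fun z hz => Set.mem_biUnion hst hz
        rw [S.supp_sub (hPr t ht)] at hsub
        calc interior s.carrier ⊆ interior (S.lam • t.carrier) := interior_mono hsub
        _ = S.lam • interior t.carrier := S.interior_smul' _
      have h2 : interior s'.carrier ⊆ S.lam • interior t'.carrier := by
        have hsub : s'.carrier ⊆ psupp (S.sub t') := fun z hz => Set.mem_biUnion hst' hz
        rw [S.supp_sub (hPr t' ht')] at hsub
        calc interior s'.carrier ⊆ interior (S.lam • t'.carrier) := interior_mono hsub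
        _ = S.lam • interior t'.carrier := S.interior_smul' _
      have hd := hP.1.2 t ht t' ht' htt
      apply Set.eq_empty_of_subset_empty
      calc interior s.carrier ∩ interior s'.carrier
          ⊆ S.lam • interior t.carrier ∩ S.lam • interior t'.carrier :=
            Set.inter_subset_inter h1 h2
        _ = S.lam • (interior t.carrier ∩ interior t'.carrier) := (S.smul_set_inter' _ _).symm
        _ = ∅ := by rw [hd, Set.smul_set_empty]
  · exact Set.Finite.biUnion hP.2 fun t ht => (S.patch_sub (hPr t ht)).1.2
  · intro s hs
    obtain ⟨t, ht, hst⟩ := (hmem s).mp hs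
    exact (S.patch_sub (hPr t ht)).2 s hst

lemma nice_omegan (n : ℕ) {p : Tile d} (hp : p ∈ S.proto) :
    IsPatch (S.omegan n p) ∧
      ∀ s ∈ S.omegan n p, ∃ q ∈ S.proto, ∃ z : Pt d, s = q.translate z := by
  induction n with
  | zero =>
    constructor
    · refine ⟨⟨?_, ?_⟩, Set.finite_singleton p⟩
      · intro t ht; rw [Set.mem_singleton_iff.mp ht]; exact S.proto_isTile p hp
      · intro t ht t' ht' hne
        exact absurd ((Set.mem_singleton_iff.mp ht).trans
          (Set.mem_singleton_iff.mp ht').symm) hne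
    · intro s hs
      rw [Set.mem_singleton_iff.mp hs]
      exact ⟨p, hp, 0, (Tile.translate_zero p).symm⟩
  | succ n ih =>
    have : S.omegan (n+1) p = S.subSet (S.omegan n p) := by
      show (S.subSet)^[n+1] {p} = _
      rw [Function.iterate_succ_apply']
      rfl
    rw [this]
    exact S.nice_subSet ih.1 ih.2

lemma puncture_unique {t : Tile d} {a b : Pt d}
    (ha : S.IsPuncture t a) (hb : S.IsPuncture t b) : a = b := by
  obtain ⟨p₁, hp₁, h₁⟩ := ha
  obtain ⟨p₂, hp₂, h₂⟩ := hb
  have h12 : p₁.translate a = p₂.translate b := h₁.symm.trans h₂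
  have hc := congrArg Tile.carrier h12
  have hl := congrArg Tile.label h12
  simp only [Tile.translate] at hc hl
  have hpt : p₂ = p₁.translate (a - b) := by
    refine Tile.ext' ?_ hl.symm
    have hcomp : (fun y => y + (-b)) '' ((fun y => y + b) '' p₂.carrier) = p₂.carrier := by
      rw [Set.image_image]; simp
    have : p₂.carrier = (fun y => y + (-b)) '' ((fun y => y + a) '' p₁.carrier) := by
      rw [hc]; exact hcomp.symm
    rw [this, Set.image_image]
    show _ = (fun y => y + (a - b)) '' p₁.carrier
    apply Set.image_congr'
    intro y
    abel
  have := (S.proto_no_translate p₁ hp₁ p₂ hp₂ (a - b) hpt).2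
  exact sub_eq_zero.mp this

lemma punc_mem_interior {t : Tile d} {a : Pt d} (h : S.IsPuncture t a) :
    a ∈ interior t.carrier := by
  obtain ⟨q, hq, rfl⟩ := h
  show a ∈ interior ((fun y => y + a) '' q.carrier)
  rw [interior_translate]
  exact ⟨0, S.proto_zero_mem q hq, zero_add a⟩

end SubstSystem

lemma rhoCum_succ (S : SubstSystem d) (n : ℕ) (p : Tile d) (j : ℕ) :
    rhoCum S n p (j + 1) = rhoCum S n p j ∪
      {x ∈ S.Punc n p | x ∉ rhoCum S n p j ∧
        ((tileOf S n p x).carrier ∩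
          frontier (psupp {t ∈ S.omegan n p |
            ∀ x' : Pt d, S.IsPuncture t x' → x' ∉ rhoCum S n p j})).Nonempty} := rfl

lemma rhoCum_subset_punc (S : SubstSystem d) (n : ℕ) (p : Tile d) (j : ℕ) :
    rhoCum S n p j ⊆ S.Punc n p := by
  induction j with
  | zero => exact Set.empty_subset _
  | succ j ih =>
    rw [rhoCum_succ]
    exact Set.union_subset ih (Set.sep_subset _ _)

lemma rhoCum_mono (S : SubstSystem d) (n : ℕ) (p : Tile d) :
    Monotone (rhoCum S n p) := by
  apply monotone_nat_of_le_succ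
  intro j
  rw [rhoCum_succ]
  exact Set.subset_union_left

lemma tileOf_spec (S : SubstSystem d) (n : ℕ) (p : Tile d) {x : Pt d}
    (hx : x ∈ S.Punc n p) :
    tileOf S n p x ∈ S.omegan n p ∧ S.IsPuncture (tileOf S n p x) x := by
  have h : ∃ t ∈ S.omegan n p, S.IsPuncture t x := hx
  rw [tileOf, dif_pos h]
  exact h.choose_spec

/-- Finite Baire-style lemma: a nonempty open set covered by finitely many closed
tiles meets the interior of one of them. -/
lemma baire_finite {T : Set (Tile d)} (hT : T.Finite)
    (hcl : ∀ t ∈ T, IsClosed t.carrier) :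
    ∀ O : Set (Pt d), IsOpen O → O.Nonempty → O ⊆ psupp T →
      ∃ t ∈ T, (interior t.carrier ∩ O).Nonempty := by
  revert hcl
  refine Set.Finite.induction_on _ hT ?_ ?_
  · intro _ O _ hne hsub
    obtain ⟨z, hz⟩ := hne
    have := hsub hz
    simp [psupp] at this
  · intro a s ha hs ih hcl O hO hne hsub
    by_cases hcase : (interior a.carrier ∩ O).Nonempty
    · exact ⟨a, Set.mem_insert a s, hcase⟩
    · have hclA : IsClosed a.carrier := hcl a (Set.mem_insert a s)
      have hO' : IsOpen (O \ a.carrier) := hO.sdiff hclA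
      have hne' : (O \ a.carrier).Nonempty := by
        by_contra hemp
        rw [Set.not_nonempty_iff_eq_empty, Set.diff_eq_empty] at hemp
        have : O ⊆ interior a.carrier := hO.subset_interior_iff.mpr hemp
        obtain ⟨z, hz⟩ := hne
        exact hcase ⟨z, this hz, hz⟩
      have hsub' : O \ a.carrier ⊆ psupp s := by
        intro z hz
        have h1 := hsub hz.1
        simp only [psupp, Set.mem_iUnion, exists_prop] at h1 ⊢
        obtain ⟨t, ht, hzt⟩ := h1
        rcases Set.mem_insert_iff.mp ht with rfl | hts
        · exact absurd hzt hz.2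
        · exact ⟨t, hts, hzt⟩
      obtain ⟨t, hts, hmeet⟩ := ih (fun t ht => hcl t (Set.mem_insert_of_mem a ht))
        (O \ a.carrier) hO' hne' hsub'
      exact ⟨t, Set.mem_insert_of_mem a hts,
        hmeet.mono (Set.inter_subset_inter_right _ Set.diff_subset)⟩

/-- One-sided version of Statement 12. -/
lemma stmt12_oneside {d : ℕ} (S : SubstSystem d)
    (n : ℕ) (p : Tile d) (hp : p ∈ S.proto)
    (k m : ℕ) (x y : Pt d) (hx : x ∈ rho S n p k) (hy : y ∈ rho S n p m)
    (hadj : IsConnected (interior ((tileOf S n p x).carrier ∪ (tileOf S n p y).carrier))) :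
    m ≤ k + 1 := by
  by_contra hm
  push_neg at hm
  have hk1m : k + 1 ≤ m := by omega
  have hk2m : k + 2 ≤ m := by omega
  obtain ⟨hx1, hx0⟩ := hx
  obtain ⟨hy1, hy0⟩ := hy
  have hxP : x ∈ S.Punc n p := rhoCum_subset_punc S n p (k+1) hx1
  have hyP : y ∈ S.Punc n p := rhoCum_subset_punc S n p (m+1) hy1
  set tx := tileOf S n p x with htx
  set ty := tileOf S n p y with hty
  obtain ⟨htxΩ, htxp⟩ := tileOf_spec S n p hxP
  obtain ⟨htyΩ, htyp⟩ := tileOf_spec S n p hyP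
  obtain ⟨hpatch, hproto⟩ := S.nice_omegan n hp
  -- y survives past stage k+2
  have hyk1 : y ∉ rhoCum S n p (k+1) := fun h => hy0 (rhoCum_mono S n p hk1m h)
  have hyk2 : y ∉ rhoCum S n p (k+2) := fun h => hy0 (rhoCum_mono S n p hk2m h)
  -- survivors at stage k+1
  set Surv := {t ∈ S.omegan n p |
    ∀ x' : Pt d, S.IsPuncture t x' → x' ∉ rhoCum S n p (k+1)} with hSurvDef
  set F := psupp Surv with hFdef
  -- ty is a survivor
  have htySurv : ty ∈ Surv := by
    refine ⟨htyΩ, fun x' hx' hmem => ?_⟩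
    rw [S.puncture_unique hx' htyp] at hmem
    exact hyk1 hmem
  have htyF : ty.carrier ⊆ F := fun z hz => Set.mem_biUnion htySurv hz
  -- F is closed
  have hSurvFin : Surv.Finite := hpatch.2.subset (Set.sep_subset _ _)
  have hSurvCl : ∀ t ∈ Surv, IsClosed t.carrier :=
    fun t ht => (hpatch.1.1 t ht.1).isClosed
  have hFcl : IsClosed F := hSurvFin.isClosed_biUnion hSurvCl
  -- ty does not meet the frontier of F
  have htyfr : ty.carrier ∩ frontier F = ∅ := by
    by_contra hne
    have hne' : (ty.carrier ∩ frontier F).Nonempty := Set.nonempty_iff_ne_empty.mpr hne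
    apply hyk2
    rw [show k + 2 = (k + 1) + 1 from rfl, rhoCum_succ]
    exact Set.mem_union_right _ ⟨hyP, hyk1, hne'⟩
  -- hence ty.carrier ⊆ interior F
  have htyInt : ty.carrier ⊆ interior F := by
    intro z hz
    by_contra hzi
    have hzfr : z ∈ frontier F := by
      rw [hFcl.frontier_eq]
      exact ⟨htyF hz, hzi⟩
    have hmem : z ∈ ty.carrier ∩ frontier F := ⟨hz, hzfr⟩
    rw [htyfr] at hmem
    exact hmem
  -- survivors are distinct from tx
  have hSurvNe : ∀ t ∈ Surv, t ≠ tx := by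
    rintro t ht rfl
    exact ht.2 x htxp hx1
  -- disjointness of interiors against tx
  have hdisj : ∀ t' ∈ Surv, interior t'.carrier ∩ interior tx.carrier = ∅ :=
    fun t' ht' => hpatch.1.2 t' ht'.1 tx htxΩ (hSurvNe t' ht')
  -- a point of interior tx outside F
  have hxint : x ∈ interior tx.carrier := S.punc_mem_interior htxp
  have hW : ∃ w, w ∈ interior tx.carrier ∧ w ∉ F := by
    by_contra hc
    push_neg at hc
    have hsub : interior tx.carrier ⊆ F := fun w hw => hc w hw
    obtain ⟨t', ht', hmeet⟩ := baire_finite hSurvFin hSurvCl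
      (interior tx.carrier) isOpen_interior ⟨x, hxint⟩ hsub
    rw [hdisj t' ht'] at hmeet
    exact Set.not_nonempty_empty hmeet
  obtain ⟨w, hwint, hwF⟩ := hW
  -- the connected set
  set A := interior (tx.carrier ∪ ty.carrier) with hAdef
  have hAx : interior tx.carrier ⊆ A := interior_mono Set.subset_union_left
  have hAy : interior ty.carrier ⊆ A := interior_mono Set.subset_union_right
  have htyCl : IsClosed ty.carrier := (hpatch.1.1 ty htyΩ).isClosed
  -- A ∩ ty.carrier ⊆ interior ty.carrier
  have hcover : A ⊆ interior ty.carrier ∪ ty.carrierᶜ := by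
    intro z hz
    by_cases hzty : z ∈ ty.carrier
    · left
      by_contra hzi
      -- z ∈ A ∩ interior F, but not interior ty
      have hzIntF : z ∈ interior F := htyInt hzty
      set W := A ∩ interior F with hWdef
      have hWopen : IsOpen W := isOpen_interior.inter isOpen_interior
      have hzW : z ∈ W := ⟨hz, hzIntF⟩
      have hzcl : z ∈ closure ty.carrierᶜ := by
        rw [closure_compl]
        exact hzi
      have hWne : (W ∩ ty.carrierᶜ).Nonempty :=
        (_root_.mem_closure_iff.mp hzcl) W hWopen hzW
      have hW'open : IsOpen (W \ ty.carrier) := hWopen.sdiff htyCl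
      have hW'tx : W \ ty.carrier ⊆ tx.carrier := by
        rintro u ⟨⟨huA, _⟩, huty⟩
        rcases (interior_subset huA : u ∈ tx.carrier ∪ ty.carrier) with h | h
        · exact h
        · exact absurd h huty
      have hW'int : W \ ty.carrier ⊆ interior tx.carrier :=
        hW'open.subset_interior_iff.mpr hW'tx
      have hW'F : W \ ty.carrier ⊆ F := fun u hu => interior_subset hu.1.2
      obtain ⟨t', ht', hmeet⟩ := baire_finite hSurvFin hSurvCl
        (W \ ty.carrier) hW'open hWne hW'F
      obtain ⟨u, hu1, hu2⟩ := hmeet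
      have : u ∈ interior t'.carrier ∩ interior tx.carrier := ⟨hu1, hW'int hu2⟩
      rw [hdisj t' ht'] at this
      exact this
    · right; exact hzty
  -- connectedness contradiction
  have hyA : y ∈ A := hAy (S.punc_mem_interior htyp)
  have hU : (A ∩ interior ty.carrier).Nonempty := ⟨y, hyA, S.punc_mem_interior htyp⟩
  have hV : (A ∩ ty.carrierᶜ).Nonempty := ⟨w, hAx hwint, fun h => hwF (htyF h)⟩
  have := hadj.isPreconnected (interior ty.carrier) ty.carrierᶜ
    isOpen_interior htyCl.isOpen_compl hcover hU hV
  obtain ⟨u, _, hu1, hu2⟩ := this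
  exact hu2 (interior_subset hu1)

/-- If `x ∈ ρ^k(n, p)` and `y ∈ ρ^m(n, p)` are distinct punctures whose
tiles `t(x)`, `t(y)` are adjacent, then `|k − m| ≤ 1`. -/
theorem stmt12 {d : ℕ} (hd : 1 ≤ d) (S : SubstSystem d)
    (n : ℕ) (p : Tile d) (hp : p ∈ S.proto)
    (k m : ℕ) (x y : Pt d) (hx : x ∈ rho S n p k) (hy : y ∈ rho S n p m)
    (hxy : x ≠ y)
    (hadj : IsConnected (interior ((tileOf S n p x).carrier ∪ (tileOf S n p y).carrier))) :
    k ≤ m + 1 ∧ m ≤ k + 1 := by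
  constructor
  · refine stmt12_oneside S n p hp m k y x hy hx ?_
    rw [Set.union_comm]
    exact hadj
  · exact stmt12_oneside S n p hp k m x y hx hy hadj
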